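/- arXiv:1212.2336 — 2 statements merged into one kernel-verified Lean document; each statement's English description precedes it below -/
import Mathlib

section
/- A one-dimensional linear subspace L of V is a Weyl line if and only if L is spanned by a vector of V taking exactly two distinct values among its coordinates. Moreover, the map sending a Weyl line L to the partition of {1,…,n+1} into the two level sets of any spanning vector of L is well defined (independent of the chosen spanning vector) and is a bijection from the set of Weyl lines onto the set of partitions of {1,…,n+1} into two nonempty parts. -/
/-! Basic setup: type A_n geometric representation, Weyl lines, combinatorics. -/

namespace TLpaper

/-- A permutation is a transposition. -/
def IsTransposition {α : Type} [DecidableEq α] (σ : Equiv.Perm α) : Prop :=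
  ∃ a b, a ≠ b ∧ σ = Equiv.swap a b

variable (k : Type) [Field k] [CharZero k] (n : ℕ)

/-- The reflecting hyperplane of a permutation `t` inside `V = {x | ∑ x i = 0}`:
the set of points of `V` fixed by permuting the coordinates by `t`.  For a
transposition `t = (a b)` this is `{x ∈ V | x a = x b}`. -/
def Hyp (t : Equiv.Perm (Fin (n + 1))) : Set (Fin (n + 1) → k) :=
  {x | (∑ i, x i) = 0 ∧ ∀ i, x (t i) = x i}

/-- A Weyl line: a one-dimensional linear subspace of `V` which is an
intersection of a (possibly empty) family of reflecting hyperplanes. -/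
def IsWeylLine (L : Set (Fin (n + 1) → k)) : Prop :=
  (∃ v : Fin (n + 1) → k, v ≠ 0 ∧ L = Set.range fun c : k => c • v) ∧
  ∃ T : Set (Equiv.Perm (Fin (n + 1))),
    (∀ t ∈ T, IsTransposition t) ∧
    L = {x | (∑ i, x i) = 0} ∩ ⋂ t ∈ T, Hyp k n t

/-- `Z`: the union of all Weyl lines. -/
def ZZ : Set (Fin (n + 1) → k) := ⋃ L ∈ {L | IsWeylLine k n L}, L

/-- `V_t`: the union of all Weyl lines transverse to `t` (i.e. not contained in `H_t`). -/
def Vt (t : Equiv.Perm (Fin (n + 1))) : Set (Fin (n + 1) → k) :=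
  ⋃ L ∈ {L | IsWeylLine k n L ∧ ¬L ⊆ Hyp k n t}, L

open Fin.NatCast in
/-- The simple transposition `s_i = (i, i+1)` (0-indexed: it swaps coordinates
`i` and `i+1` of `Fin (n+1)`, for `i < n`). -/
def simple (i : ℕ) : Equiv.Perm (Fin (n + 1)) :=
  Equiv.swap (i : Fin (n + 1)) ((i + 1 : ℕ) : Fin (n + 1))

/-- `V_i := V_{s_i}`. -/
def Vi (i : ℕ) : Set (Fin (n + 1) → k) := Vt k n (simple n i)

/-- The action of a permutation on a subset of `k^{n+1}` (permuting coordinates). -/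
def permSet (σ : Equiv.Perm (Fin (n + 1))) (W : Set (Fin (n + 1) → k)) :
    Set (Fin (n + 1) → k) :=
  (fun x => x ∘ σ) '' W

/-- `i · W := V_i ∩ (W ∪ s_i (W))`. -/
def dotAct (i : ℕ) (W : Set (Fin (n + 1) → k)) : Set (Fin (n + 1) → k) :=
  Vi k n i ∩ (W ∪ permSet k n (simple n i) W)

/-- The set `W_{i_1 ⋯ i_m}` associated with a sequence of indices. -/
def seqSet : List ℕ → Set (Fin (n + 1) → k)
  | [] => ZZ k n
  | [i] => Vi k n i
  | i :: j :: l => dotAct k n i (seqSet (j :: l))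

/-- Membership in the family `𝒱_n`. -/
def memVn (W : Set (Fin (n + 1) → k)) : Prop :=
  ∃ l : List ℕ, l ≠ [] ∧ (∀ i ∈ l, i < n) ∧ W = seqSet k n l

/-- A set of pairwise commuting transpositions. -/
def CommTranspositions (Q : Set (Equiv.Perm (Fin (n + 1)))) : Prop :=
  (∀ t ∈ Q, IsTransposition t) ∧ ∀ t ∈ Q, ∀ t' ∈ Q, t * t' = t' * t


set_option linter.unusedSectionVars false

section Aux

variable {k n}

private lemma sum_ite_card {m : ℕ} (P : Fin m → Prop) [DecidablePred P] (c : k) :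
    ∑ i, (if P i then c else 0) = ((Finset.univ.filter P).card : k) * c := by
  rw [← Finset.sum_filter, Finset.sum_const, nsmul_eq_mul]

private lemma sum_split {m : ℕ} [DecidableEq k] (v : Fin m → k) {a b : k} (hab : a ≠ b)
    (c d : k) :
    ∑ i, (if v i = a then c else if v i = b then d else 0)
      = ((Finset.univ.filter fun i => v i = a).card : k) * c
        + ((Finset.univ.filter fun i => v i = b).card : k) * d := by
  have h : ∀ i, (if v i = a then c else if v i = b then d else 0)
      = (if v i = a then c else 0) + (if v i = b then d else 0) := by
    intro i
    by_cases h1 : v i = a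
    · have h2 : v i ≠ b := by rw [h1]; exact hab
      simp [h1, h2, hab]
    · simp [h1]
  simp only [h]
  rw [Finset.sum_add_distrib, sum_ite_card, sum_ite_card]

private lemma span_eq_S (v : Fin (n+1) → k) {a b : k} (hab : a ≠ b)
    (hrange : Set.range v = {a, b}) (hsum : (∑ i, v i) = 0) :
    (Set.range fun c : k => c • v)
      = {x : Fin (n+1) → k | (∑ i, x i) = 0 ∧ ∀ i j, v i = v j → x i = x j} := by
  classical
  have hmem : ∀ i, v i = a ∨ v i = b := by
    intro i
    have h : v i ∈ Set.range v := ⟨i, rfl⟩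
    rw [hrange] at h
    simpa using h
  obtain ⟨i₀, hi₀⟩ : ∃ i, v i = a := by
    have h : a ∈ Set.range v := by rw [hrange]; exact Set.mem_insert _ _
    exact h
  obtain ⟨j₀, hj₀⟩ : ∃ i, v i = b := by
    have h : b ∈ Set.range v := by rw [hrange]; exact Set.mem_insert_of_mem _ rfl
    exact h
  set p : ℕ := (Finset.univ.filter fun i => v i = a).card with hpdef
  set q : ℕ := (Finset.univ.filter fun i => v i = b).card with hqdef
  have hq0 : (q : k) ≠ 0 :=
    Nat.cast_ne_zero.2 (Finset.card_pos.2 ⟨j₀, by simp [hj₀]⟩).ne'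
  have hsum2 : (p:k) * a + (q:k) * b = 0 := by
    have e : (∑ i, v i) = ∑ i, (if v i = a then a else if v i = b then b else 0) := by
      refine Finset.sum_congr rfl fun i _ => ?_
      rcases hmem i with h | h
      · simp [h]
      · have hne : v i ≠ a := by rw [h]; exact Ne.symm hab
        rw [if_neg hne, if_pos h]; exact h
    rw [← sum_split v hab a b, ← e, hsum]
  have ha0 : a ≠ 0 := by
    intro h
    rw [h, mul_zero, zero_add] at hsum2
    have hb0 : b = 0 := (mul_eq_zero.1 hsum2).resolve_left hq0
    exact hab (h.trans hb0.symm)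
  ext x
  constructor
  · rintro ⟨c, rfl⟩
    refine ⟨?_, fun i j hij => by simp [hij]⟩
    simp only [Pi.smul_apply, smul_eq_mul]
    rw [← Finset.mul_sum, hsum, mul_zero]
  · rintro ⟨hxsum, hx⟩
    have hxa : ∀ i, v i = a → x i = x i₀ := fun i h => hx i i₀ (h.trans hi₀.symm)
    have hxb : ∀ i, v i = b → x i = x j₀ := fun i h => hx i j₀ (h.trans hj₀.symm)
    have hxsum2 : (p:k) * x i₀ + (q:k) * x j₀ = 0 := by
      have e : (∑ i, x i) = ∑ i, (if v i = a then x i₀ else if v i = b then x j₀ else 0) := by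
        refine Finset.sum_congr rfl fun i _ => ?_
        rcases hmem i with h | h
        · rw [if_pos h]; exact hxa i h
        · have hne : v i ≠ a := by rw [h]; exact Ne.symm hab
          rw [if_neg hne, if_pos h]; exact hxb i h
      rw [← sum_split v hab (x i₀) (x j₀), ← e, hxsum]
    refine ⟨x i₀ / a, ?_⟩
    funext m
    show (x i₀ / a) * v m = x m
    rcases hmem m with h | h
    · rw [h, hxa m h, div_mul_cancel₀ _ ha0]
    · rw [h, hxb m h]
      rw [div_mul_eq_mul_div, div_eq_iff ha0]
      refine mul_left_cancel₀ hq0 ?_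
      linear_combination x i₀ * hsum2 - a * hxsum2


private lemma weyl_char (L : Set (Fin (n+1) → k)) (h : IsWeylLine k n L) :
    ∃ v : Fin (n+1) → k, (∑ i, v i) = 0 ∧ (Set.range v).ncard = 2 ∧
      L = Set.range fun c : k => c • v := by
  classical
  obtain ⟨⟨v, hv0, hLv⟩, T, hT, hLT⟩ := h
  have hvL : v ∈ L := hLv ▸ ⟨1, one_smul k v⟩
  have hvmem : v ∈ ({x : Fin (n+1) → k | (∑ i, x i) = 0} ∩ ⋂ t ∈ T, Hyp k n t) := hLT ▸ hvL
  obtain ⟨hvsum, hvI⟩ := hvmem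
  have hfix : ∀ t ∈ T, ∀ i, v (t i) = v i := by
    intro t ht
    exact (Set.mem_iInter₂.1 hvI t ht).2
  have hgadget : ∀ g : k → k, (∑ i, g (v i)) = 0 → ∃ c₀ : k, (fun i => g (v i)) = c₀ • v := by
    intro g hg
    have hx : (fun i => g (v i)) ∈ L := by
      rw [hLT]
      exact ⟨hg, Set.mem_iInter₂.2 fun t ht => ⟨hg, fun i => congrArg g (hfix t ht i)⟩⟩
    rw [hLv] at hx
    obtain ⟨c₀, hc₀⟩ := hx
    exact ⟨c₀, hc₀.symm⟩
  have nothird : ∀ a b c : k, a ∈ Set.range v → b ∈ Set.range v → c ∈ Set.range v →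
      a ≠ b → a ≠ c → b ≠ c → c ≠ 0 → False := by
    rintro a b c ⟨ia, hia⟩ ⟨ib, hib⟩ ⟨ic, hic⟩ hab hac hbc hc0
    set p : ℕ := (Finset.univ.filter fun i => v i = a).card with hpdef
    set q : ℕ := (Finset.univ.filter fun i => v i = b).card with hqdef
    have hq0 : (q : k) ≠ 0 :=
      Nat.cast_ne_zero.2 (Finset.card_pos.2 ⟨ib, by simp [hib]⟩).ne'
    obtain ⟨c₀, hc₀⟩ := hgadget (fun y => if y = a then ((q:k)) else if y = b then -(p:k) else 0)
      (by
        show (∑ i, (if v i = a then ((q:k)) else if v i = b then -(p:k) else 0)) = 0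
        rw [sum_split v hab ((q:k)) (-(p:k))]
        ring)
    have h1 := congrFun hc₀ ic
    have h2 := congrFun hc₀ ia
    simp only [Pi.smul_apply, smul_eq_mul, hic, hia] at h1 h2
    rw [if_neg (Ne.symm hac), if_neg (Ne.symm hbc)] at h1
    have hc₀0 : c₀ = 0 := by
      rcases mul_eq_zero.1 h1.symm with h | h
      · exact h
      · exact absurd h hc0
    rw [hc₀0, zero_mul, if_pos trivial] at h2
    exact hq0 h2
  obtain ⟨i₁, hi₁⟩ : ∃ i, v i ≠ 0 := by
    by_contra hno
    push_neg at hno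
    exact hv0 (funext fun i => hno i)
  obtain ⟨j₁, hj₁⟩ : ∃ j, v j ≠ v i₁ := by
    by_contra hno
    push_neg at hno
    have hconst : (∑ i, v i) = (n+1 : ℕ) • v i₁ := by
      rw [Finset.sum_congr rfl fun i _ => hno i, Finset.sum_const, Finset.card_univ,
        Fintype.card_fin]
    have h0 : ((n+1 : ℕ) : k) * v i₁ = 0 := by rw [← nsmul_eq_mul, ← hconst, hvsum]
    exact hi₁ ((mul_eq_zero.1 h0).resolve_left (Nat.cast_ne_zero.2 (Nat.succ_ne_zero n)))
  have hrange : Set.range v = {v i₁, v j₁} := by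
    apply Set.Subset.antisymm
    · rintro _ ⟨m, rfl⟩
      by_contra hm
      simp only [Set.mem_insert_iff, Set.mem_singleton_iff, not_or] at hm
      obtain ⟨hm1, hm2⟩ := hm
      by_cases hvm : v m = 0
      · exact nothird (v m) (v j₁) (v i₁) ⟨m, rfl⟩ ⟨j₁, rfl⟩ ⟨i₁, rfl⟩ hm2 hm1 hj₁ hi₁
      · exact nothird (v i₁) (v j₁) (v m) ⟨i₁, rfl⟩ ⟨j₁, rfl⟩ ⟨m, rfl⟩ (Ne.symm hj₁)
          (Ne.symm hm1) (Ne.symm hm2) hvm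
    · intro x hx
      simp only [Set.mem_insert_iff, Set.mem_singleton_iff] at hx
      rcases hx with rfl | rfl
      exacts [⟨i₁, rfl⟩, ⟨j₁, rfl⟩]
  refine ⟨v, hvsum, ?_, hLv⟩
  rw [hrange]
  exact Set.ncard_pair (Ne.symm hj₁)

private lemma weyl_of_two (v : Fin (n+1) → k) {a b : k} (hab : a ≠ b)
    (hrange : Set.range v = {a, b}) (hsum : (∑ i, v i) = 0) :
    IsWeylLine k n (Set.range fun c : k => c • v) := by
  classical
  have hv0 : v ≠ 0 := by
    intro h
    have ha : a ∈ Set.range v := by rw [hrange]; exact Set.mem_insert _ _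
    have hb : b ∈ Set.range v := by rw [hrange]; exact Set.mem_insert_of_mem _ rfl
    obtain ⟨i, hi⟩ := ha
    obtain ⟨j, hj⟩ := hb
    rw [h] at hi hj
    exact hab (hi.symm.trans hj)
  refine ⟨⟨v, hv0, rfl⟩, {t | IsTransposition t ∧ ∀ i, v (t i) = v i},
    fun t ht => ht.1, ?_⟩
  rw [span_eq_S v hab hrange hsum]
  ext x
  simp only [Set.mem_setOf_eq, Set.mem_inter_iff, Set.mem_iInter, Hyp]
  constructor
  · rintro ⟨hx1, hx2⟩
    exact ⟨hx1, fun t ht => ⟨hx1, fun i => hx2 _ _ (ht.2 i)⟩⟩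
  · rintro ⟨hx1, hx2⟩
    refine ⟨hx1, fun i j hij => ?_⟩
    rcases eq_or_ne i j with rfl | hne
    · rfl
    · have hfixv : ∀ m, v (Equiv.swap i j m) = v m := by
        intro m
        rcases eq_or_ne m i with rfl | hmi
        · rw [Equiv.swap_apply_left]; exact hij.symm
        rcases eq_or_ne m j with rfl | hmj
        · rw [Equiv.swap_apply_right]; exact hij
        · rw [Equiv.swap_apply_of_ne_of_ne hmi hmj]
      have ht := hx2 (Equiv.swap i j) ⟨⟨i, j, hne, rfl⟩, hfixv⟩
      have := ht.2 i
      rw [Equiv.swap_apply_left] at this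
      exact this.symm

end Aux

/-- A one-dimensional linear subspace `L` of `V` is a Weyl line iff it
is spanned by a vector of `V` taking exactly two distinct values among its coordinates.
Moreover the map sending a Weyl line to the partition of `{1, …, n+1}` (formalized as the
setoid `Setoid.ker v` on `Fin (n+1)`) into the two level sets of any spanning vector is
well defined and a bijection onto the partitions into two nonempty parts (formalized as
setoids with exactly two classes). -/
theorem weyl_lines_iff_two_values_and_bijection_with_partitions (hn : 1 ≤ n) :
    -- characterization of Weyl lines
    (∀ L : Set (Fin (n + 1) → k),
      IsWeylLine k n L ↔
        ∃ v : Fin (n + 1) → k, (∑ i, v i) = 0 ∧ (Set.range v).ncard = 2 ∧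
          L = Set.range fun c : k => c • v) ∧
    -- the partition map is well defined: independent of the chosen spanning vector
    (∀ L : Set (Fin (n + 1) → k), IsWeylLine k n L →
      ∀ v w : Fin (n + 1) → k, v ≠ 0 → w ≠ 0 →
        L = (Set.range fun c : k => c • v) → L = (Set.range fun c : k => c • w) →
        Setoid.ker v = Setoid.ker w) ∧
    -- injectivity of the partition map
    (∀ L L' : Set (Fin (n + 1) → k), IsWeylLine k n L → IsWeylLine k n L' →
      ∀ v w : Fin (n + 1) → k, v ≠ 0 → w ≠ 0 →
        L = (Set.range fun c : k => c • v) → L' = (Set.range fun c : k => c • w) →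
        Setoid.ker v = Setoid.ker w → L = L') ∧
    -- surjectivity onto partitions of `Fin (n+1)` into two (nonempty) parts
    (∀ s : Setoid (Fin (n + 1)), (Setoid.classes s).ncard = 2 →
      ∃ (L : Set (Fin (n + 1) → k)) (v : Fin (n + 1) → k),
        IsWeylLine k n L ∧ v ≠ 0 ∧ L = (Set.range fun c : k => c • v) ∧
        Setoid.ker v = s) := by
  classical
  refine ⟨?_, ?_, ?_, ?_⟩
  · -- characterization
    intro L
    constructor
    · exact weyl_char L
    · rintro ⟨v, hsum, hn2, hL⟩
      obtain ⟨a, b, hab, hrange⟩ := Set.ncard_eq_two.1 hn2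
      rw [hL]
      exact weyl_of_two v hab hrange hsum
  · -- well-definedness
    intro L _ v w hv hw hLv hLw
    have hwv : ∃ c : k, w = c • v := by
      have hmem : w ∈ L := hLw ▸ ⟨1, one_smul k w⟩
      rw [hLv] at hmem
      obtain ⟨c, hc⟩ := hmem
      exact ⟨c, hc.symm⟩
    obtain ⟨c, rfl⟩ := hwv
    have hc0 : c ≠ 0 := by
      rintro rfl
      simp at hw
    refine Setoid.ext fun i j => ?_
    show v i = v j ↔ (c • v) i = (c • v) j
    simp only [Pi.smul_apply, smul_eq_mul]
    exact (mul_right_inj' hc0).symm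
  · -- injectivity
    intro L L' hWL hWL' v w hv hw hLv hLw hker
    obtain ⟨v₁, hs₁, hn₁, hL₁⟩ := weyl_char L hWL
    obtain ⟨w₁, hs₂, hn₂, hL₂⟩ := weyl_char L' hWL'
    -- express v in terms of v₁
    have hvmem : v ∈ L := hLv ▸ ⟨1, one_smul k v⟩
    rw [hL₁] at hvmem
    obtain ⟨c₁, hc₁⟩ := hvmem
    have hc₁0 : c₁ ≠ 0 := by
      rintro rfl
      exact hv (hc₁.symm.trans (zero_smul k v₁))
    have hsv : (∑ i, v i) = 0 := by
      rw [← hc₁]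
      show (∑ i, c₁ * v₁ i) = 0
      rw [← Finset.mul_sum, hs₁, mul_zero]
    obtain ⟨a, b, hab, hr₁⟩ := Set.ncard_eq_two.1 hn₁
    have hrv : Set.range v = {c₁ * a, c₁ * b} := by
      rw [← hc₁]
      ext y
      simp only [Set.mem_range, Pi.smul_apply, smul_eq_mul, Set.mem_insert_iff,
        Set.mem_singleton_iff]
      constructor
      · rintro ⟨i, rfl⟩
        have hmem : v₁ i ∈ Set.range v₁ := ⟨i, rfl⟩
        rw [hr₁] at hmem
        simp only [Set.mem_insert_iff, Set.mem_singleton_iff] at hmem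
        rcases hmem with h | h
        · left; rw [h]
        · right; rw [h]
      · rintro (rfl | rfl)
        · have hmem : a ∈ Set.range v₁ := by rw [hr₁]; exact Set.mem_insert _ _
          obtain ⟨i, hi⟩ := hmem
          exact ⟨i, by rw [hi]⟩
        · have hmem : b ∈ Set.range v₁ := by rw [hr₁]; exact Set.mem_insert_of_mem _ rfl
          obtain ⟨i, hi⟩ := hmem
          exact ⟨i, by rw [hi]⟩
    have habc : c₁ * a ≠ c₁ * b := fun h => hab (mul_left_cancel₀ hc₁0 h)
    -- same for w
    have hwmem : w ∈ L' := hLw ▸ ⟨1, one_smul k w⟩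
    rw [hL₂] at hwmem
    obtain ⟨d₁, hd₁⟩ := hwmem
    have hd₁0 : d₁ ≠ 0 := by
      rintro rfl
      exact hw (hd₁.symm.trans (zero_smul k w₁))
    have hsw : (∑ i, w i) = 0 := by
      rw [← hd₁]
      show (∑ i, d₁ * w₁ i) = 0
      rw [← Finset.mul_sum, hs₂, mul_zero]
    obtain ⟨a', b', hab', hr₂⟩ := Set.ncard_eq_two.1 hn₂
    have hrw : Set.range w = {d₁ * a', d₁ * b'} := by
      rw [← hd₁]
      ext y
      simp only [Set.mem_range, Pi.smul_apply, smul_eq_mul, Set.mem_insert_iff,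
        Set.mem_singleton_iff]
      constructor
      · rintro ⟨i, rfl⟩
        have hmem : w₁ i ∈ Set.range w₁ := ⟨i, rfl⟩
        rw [hr₂] at hmem
        simp only [Set.mem_insert_iff, Set.mem_singleton_iff] at hmem
        rcases hmem with h | h
        · left; rw [h]
        · right; rw [h]
      · rintro (rfl | rfl)
        · have hmem : a' ∈ Set.range w₁ := by rw [hr₂]; exact Set.mem_insert _ _
          obtain ⟨i, hi⟩ := hmem
          exact ⟨i, by rw [hi]⟩
        · have hmem : b' ∈ Set.range w₁ := by rw [hr₂]; exact Set.mem_insert_of_mem _ rfl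
          obtain ⟨i, hi⟩ := hmem
          exact ⟨i, by rw [hi]⟩
    have habd : d₁ * a' ≠ d₁ * b' := fun h => hab' (mul_left_cancel₀ hd₁0 h)
    have hrel : ∀ i j : Fin (n+1), v i = v j ↔ w i = w j := by
      intro i j
      have h1 : (Setoid.ker v) i j ↔ (Setoid.ker w) i j := by rw [hker]
      simpa only [Setoid.ker_def] using h1
    rw [hLv, span_eq_S v habc hrv hsv, hLw, span_eq_S w habd hrw hsw]
    ext x
    simp only [Set.mem_setOf_eq]
    constructor
    · rintro ⟨h1, h2⟩
      exact ⟨h1, fun i j hij => h2 i j ((hrel i j).2 hij)⟩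
    · rintro ⟨h1, h2⟩
      exact ⟨h1, fun i j hij => h2 i j ((hrel i j).1 hij)⟩
  · -- surjectivity
    intro s hs
    obtain ⟨A, B, hAB, hcl⟩ := Set.ncard_eq_two.1 hs
    have hAcl : A ∈ s.classes := by rw [hcl]; exact Set.mem_insert _ _
    have hBcl : B ∈ s.classes := by rw [hcl]; exact Set.mem_insert_of_mem _ rfl
    obtain ⟨yA, hyA⟩ := hAcl
    obtain ⟨yB, hyB⟩ := hBcl
    have hyAA : yA ∈ A := by rw [hyA]; exact s.refl' yA
    have hyBB : yB ∈ B := by rw [hyB]; exact s.refl' yB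
    have hyBA : yB ∉ A := by
      intro h
      apply hAB
      rw [hyA] at h
      rw [hyA, hyB]
      ext x
      simp only [Set.mem_setOf_eq]
      exact ⟨fun hx => s.trans' hx (s.symm' h), fun hx => s.trans' hx h⟩
    have hcover : ∀ i : Fin (n+1), i ∈ A ∨ i ∈ B := by
      intro i
      have h := Setoid.mem_classes s i
      rw [hcl] at h
      simp only [Set.mem_insert_iff, Set.mem_singleton_iff] at h
      rcases h with h | h
      · left; rw [← h]; exact s.refl' i
      · right; rw [← h]; exact s.refl' i
    have hrelA : ∀ i j : Fin (n+1), i ∈ A → j ∈ A → s i j := by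
      intro i j hi hj
      rw [hyA] at hi hj
      exact s.trans' hi (s.symm' hj)
    have hrelB : ∀ i j : Fin (n+1), i ∈ B → j ∈ B → s i j := by
      intro i j hi hj
      rw [hyB] at hi hj
      exact s.trans' hi (s.symm' hj)
    set pn : ℕ := (Finset.univ.filter fun i : Fin (n+1) => i ∈ A).card with hpn
    set qn : ℕ := (Finset.univ.filter fun i : Fin (n+1) => i ∉ A).card with hqn
    have hpn0 : 0 < pn := Finset.card_pos.2 ⟨yA, by simp [hyAA]⟩
    have hqn0 : 0 < qn := Finset.card_pos.2 ⟨yB, by simp [hyBA]⟩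
    set v : Fin (n+1) → k := fun i => if i ∈ A then (qn:k) else -(pn:k) with hv
    have hvsum : (∑ i, v i) = 0 := by
      have he : ∀ i, v i = (if i ∈ A then (qn:k) else 0) + (if ¬ i ∈ A then -(pn:k) else 0) := by
        intro i
        by_cases h : i ∈ A <;> simp [hv, h]
      rw [Finset.sum_congr rfl fun i _ => he i, Finset.sum_add_distrib, sum_ite_card,
        sum_ite_card]
      ring
    have hne : ((qn:k)) ≠ -(pn:k) := by
      intro h
      have h2 : ((qn:k)) + (pn:k) = 0 := by rw [h]; ring
      rw [← Nat.cast_add, Nat.cast_eq_zero] at h2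
      omega
    have hrange : Set.range v = {(qn:k), -(pn:k)} := by
      ext y
      simp only [Set.mem_range, Set.mem_insert_iff, Set.mem_singleton_iff]
      constructor
      · rintro ⟨i, rfl⟩
        by_cases h : i ∈ A
        · left; simp [hv, h]
        · right; simp [hv, h]
      · rintro (rfl | rfl)
        exacts [⟨yA, by simp [hv, hyAA]⟩, ⟨yB, by simp [hv, hyBA]⟩]
    have hv0 : v ≠ 0 := by
      intro h
      have hq : (qn:k) = 0 := by simpa [hv, hyAA] using congrFun h yA
      rw [Nat.cast_eq_zero] at hq
      omega
    refine ⟨Set.range fun c : k => c • v, v, weyl_of_two v hne hrange hvsum, hv0, rfl, ?_⟩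
    refine Setoid.ext fun i j => ?_
    show v i = v j ↔ s i j
    constructor
    · intro h
      by_cases hi : i ∈ A <;> by_cases hj : j ∈ A
      · exact hrelA i j hi hj
      · exact absurd (by simpa [hv, hi, hj] using h) hne
      · exact absurd (by simpa [hv, hi, hj] using h.symm) hne
      · exact hrelB i j ((hcover i).resolve_left hi) ((hcover j).resolve_left hj)
    · intro h
      by_cases hi : i ∈ A
      · have hj : j ∈ A := by
          rw [hyA] at hi ⊢
          exact s.trans' (s.symm' h) hi
        simp [hv, hi, hj]
      · have hj : j ∉ A := by
          intro hj
          apply hi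
          rw [hyA] at hj ⊢
          exact s.trans' h hj
        simp [hv, hi, hj]

end TLpaper
end

section
/- Let Q be a set of pairwise commuting transpositions of S_{n+1}, let s be a transposition, and set W := ⋂_{t∈Q} V_t. Then W ≠ {0}, and V_s ∩ (W ∪ s(W)) = ⋂_{t∈Q'} V_t, where Q' is defined as follows: if s commutes with every t ∈ Q, then Q' = Q ∪ {s}; if there is exactly one t ∈ Q with st ≠ ts, then Q' = (Q \ {t}) ∪ {s}; if there are exactly two distinct t, t' ∈ Q with st ≠ ts and st' ≠ t's, then Q' = (Q \ {t, t'}) ∪ {s, t t' s t' t}. (These three cases are exhaustive.) Moreover Q' is again a set of pairwise commuting transpositions, and in particular V_s ∩ (W ∪ s(W)) ≠ {0}. -/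
/-! Basic setup: type A_n geometric representation, Weyl lines, combinatorics. -/

namespace TLpaper

variable (k : Type) [Field k] [CharZero k] (n : ℕ)

section Aux
set_option linter.unusedSectionVars false
variable {k n}

lemma comp_swap_eq_iff {x : Fin (n + 1) → k} {a b : Fin (n + 1)} :
    x ∘ ⇑(Equiv.swap a b) = x ↔ x a = x b := by
  constructor
  · intro h
    have := congrFun h a
    simpa using this.symm
  · intro h
    funext i
    simp only [Function.comp_apply, Equiv.swap_apply_def]
    split_ifs with h1 h2 <;> simp_all

lemma comp_swap_ne_iff {x : Fin (n + 1) → k} {a b : Fin (n + 1)} :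
    x ∘ ⇑(Equiv.swap a b) ≠ x ↔ x a ≠ x b :=
  not_congr comp_swap_eq_iff

lemma apply_swap_eq {x : Fin (n + 1) → k} {i j : Fin (n + 1)} (h : x i = x j)
    (m : Fin (n + 1)) : x (Equiv.swap i j m) = x m := by
  have := comp_swap_eq_iff.2 h
  exact congrFun this m

/-- auxiliary predicate: a vector spanning a Weyl line. -/
def LV (x : Fin (n + 1) → k) : Prop :=
  x ≠ 0 ∧ (∑ i, x i) = 0 ∧ ∀ i j l : Fin (n + 1), x i = x j ∨ x i = x l ∨ x j = x l

lemma card_cast_ne : ((n + 1 : ℕ) : k) ≠ 0 := Nat.cast_ne_zero.2 (Nat.succ_ne_zero n)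

lemma LV.exists_ne {x : Fin (n + 1) → k} (h : LV x) : ∃ a b, x a ≠ x b := by
  by_contra hcon
  push_neg at hcon
  apply h.1
  have hx0 : x 0 = 0 := by
    have : (∑ i, x i) = ((n + 1 : ℕ) : k) * x 0 := by
      rw [Finset.sum_congr rfl fun i _ => hcon i 0, Finset.sum_const, Finset.card_univ,
        Fintype.card_fin, nsmul_eq_mul]
    rw [h.2.1] at this
    exact (mul_eq_zero.1 this.symm).resolve_left (card_cast_ne (k := k))
  funext i
  rw [hcon i 0, hx0]; rfl

lemma exists_smul_eq_aux {x y : Fin (n + 1) → k}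
    (h2 : ∀ i j l : Fin (n + 1), x i = x j ∨ x i = x l ∨ x j = x l)
    (hxs : (∑ i, x i) = 0) {a b : Fin (n + 1)} (hab : x a ≠ x b)
    (hys : (∑ i, y i) = 0) (hy : ∀ i j, x i = x j → y i = y j) :
    ∃ c : k, y = c • x := by
  classical
  set A : Finset (Fin (n + 1)) := Finset.univ.filter (fun i => x i = x a) with hA
  set B : Finset (Fin (n + 1)) := Finset.univ.filter (fun i => ¬ x i = x a) with hB
  have hnot : ∀ i, ¬ x i = x a → x i = x b := by
    intro i hi
    rcases h2 i a b with h | h | h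
    · exact absurd h hi
    · exact h
    · exact absurd h hab
  have hsumx : (A.card : k) * x a + (B.card : k) * x b = 0 := by
    rw [← hxs, ← Finset.sum_filter_add_sum_filter_not Finset.univ (fun i => x i = x a) x]
    rw [Finset.sum_congr rfl (fun i hi => (Finset.mem_filter.1 hi).2),
      Finset.sum_congr rfl (fun i hi => hnot i (Finset.mem_filter.1 hi).2),
      Finset.sum_const, Finset.sum_const, nsmul_eq_mul, nsmul_eq_mul]
  have hsumy : (A.card : k) * y a + (B.card : k) * y b = 0 := by
    rw [← hys, ← Finset.sum_filter_add_sum_filter_not Finset.univ (fun i => x i = x a) y]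
    rw [Finset.sum_congr rfl (fun i hi => hy i a (Finset.mem_filter.1 hi).2),
      Finset.sum_congr rfl (fun i hi => hy i b (hnot i (Finset.mem_filter.1 hi).2)),
      Finset.sum_const, Finset.sum_const, nsmul_eq_mul, nsmul_eq_mul]
  have hBmem : b ∈ B := Finset.mem_filter.2 ⟨Finset.mem_univ _, fun h => hab h.symm⟩
  have hB0 : (B.card : k) ≠ 0 :=
    Nat.cast_ne_zero.2 (Finset.card_ne_zero_of_mem hBmem)
  have hxa0 : x a ≠ 0 := by
    intro h
    rw [h, mul_zero, zero_add] at hsumx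
    have hxb : x b = 0 := (mul_eq_zero.1 hsumx).resolve_left hB0
    exact hab (h.trans hxb.symm)
  have key : y b * x a = y a * x b := by
    have h1 : (B.card : k) * (y b * x a) = (B.card : k) * (y a * x b) := by ring_nf; linear_combination x a * hsumy - y a * hsumx
    exact mul_left_cancel₀ hB0 h1
  refine ⟨y a / x a, funext fun i => ?_⟩
  rcases h2 i a b with h | h | h
  · rw [hy i a h, Pi.smul_apply, smul_eq_mul, h]
    field_simp
  · rw [hy i b h, Pi.smul_apply, smul_eq_mul, h]
    rw [div_mul_eq_mul_div, eq_div_iff hxa0]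
    linear_combination key
  · exact absurd h hab


lemma line_subset_Vt {x : Fin (n + 1) → k} (hx : LV x) {a b : Fin (n + 1)}
    (hab : x a ≠ x b) :
    Set.range (fun c : k => c • x) ⊆ Vt k n (Equiv.swap a b) := by
  classical
  obtain ⟨hx0, hxs, hx2⟩ := hx
  intro y hy
  have hmain : Set.range (fun c : k => c • x) ∈
      {L | IsWeylLine k n L ∧ ¬L ⊆ Hyp k n (Equiv.swap a b)} := by
    constructor
    · constructor
      · exact ⟨x, hx0, rfl⟩
      · refine ⟨{σ | ∃ i j, i ≠ j ∧ x i = x j ∧ σ = Equiv.swap i j}, ?_, ?_⟩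
        · rintro t ⟨i, j, hij, -, rfl⟩; exact ⟨i, j, hij, rfl⟩
        · apply Set.Subset.antisymm
          · rintro z ⟨c, rfl⟩
            have hzs : (∑ i, (c • x) i) = 0 := by
              simp only [Pi.smul_apply, smul_eq_mul, ← Finset.mul_sum, hxs, mul_zero]
            refine ⟨hzs, Set.mem_iInter₂.2 ?_⟩
            rintro t ⟨i, j, hij, hxij, rfl⟩
            refine ⟨hzs, fun m => ?_⟩
            simp only [Pi.smul_apply, smul_eq_mul, apply_swap_eq hxij m]
          · rintro z ⟨hzs, hzT⟩
            have hzs' : (∑ i, z i) = 0 := hzs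
            have hz : ∀ i j, x i = x j → z i = z j := by
              intro i j hxij
              rcases eq_or_ne i j with rfl | hij
              · rfl
              · have := (Set.mem_iInter₂.1 hzT (Equiv.swap i j) ⟨i, j, hij, hxij, rfl⟩).2 i
                rw [Equiv.swap_apply_left] at this
                exact this.symm
            obtain ⟨c, hc⟩ := exists_smul_eq_aux hx2 hxs hab hzs' hz
            exact ⟨c, hc.symm⟩
    · intro hsub
      have hxmem : x ∈ Set.range (fun c : k => c • x) := ⟨1, one_smul _ _⟩
      have := (hsub hxmem).2 a
      rw [Equiv.swap_apply_left] at this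
      exact hab this.symm
  exact Set.mem_biUnion hmain hy

lemma sum_pattern (F : Fin (n + 1) → k) (S T' : Finset (Fin (n + 1)))
    (hST : ∀ m, m ∈ S → m ∉ T')
    (hFp : ∀ m ∈ S, F m = ((T'.card : ℕ) : k))
    (hFq : ∀ m ∈ T', F m = -((S.card : ℕ) : k))
    (hF0 : ∀ m, m ∉ S → m ∉ T' → F m = 0) :
    (∑ m, F m) = 0 := by
  classical
  have hsplit : ∀ m, F m =
      (if m ∈ S then ((T'.card : ℕ) : k) else 0) + (if m ∈ T' then -((S.card : ℕ) : k) else 0) := by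
    intro m
    by_cases h1 : m ∈ S
    · rw [if_pos h1, if_neg (hST m h1), add_zero, hFp m h1]
    · by_cases h2 : m ∈ T'
      · rw [if_neg h1, if_pos h2, zero_add, hFq m h2]
      · rw [if_neg h1, if_neg h2, add_zero, hF0 m h1 h2]
  rw [Finset.sum_congr rfl (fun m _ => hsplit m), Finset.sum_add_distrib,
    Finset.sum_ite_mem, Finset.sum_ite_mem, Finset.univ_inter, Finset.univ_inter,
    Finset.sum_const, Finset.sum_const, nsmul_eq_mul, nsmul_eq_mul]
  ring

lemma lv_of_mem_Vt {x : Fin (n + 1) → k} (hx0 : x ≠ 0) {a b : Fin (n + 1)}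
    (hx : x ∈ Vt k n (Equiv.swap a b)) : LV x ∧ x a ≠ x b := by
  classical
  simp only [Vt, Set.mem_iUnion, Set.mem_setOf_eq] at hx
  obtain ⟨L, ⟨⟨⟨v, hv0, rfl⟩, T, hT, hLT⟩, hLH⟩, hxL⟩ := hx
  obtain ⟨c, rfl⟩ := hxL
  have hc0 : c ≠ 0 := by rintro rfl; exact hx0 (zero_smul _ _)
  have hvL : v ∈ Set.range (fun c : k => c • v) := ⟨1, one_smul _ _⟩
  have hvmem := hvL
  rw [hLT] at hvmem
  obtain ⟨hvs, hvT⟩ := hvmem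
  have hvs' : (∑ i, v i) = 0 := hvs
  have hvinv : ∀ t ∈ T, ∀ m, v (t m) = v m := fun t ht => (Set.mem_iInter₂.1 hvT t ht).2
  have h2 : ∀ i j l : Fin (n + 1), v i = v j ∨ v i = v l ∨ v j = v l := by
    by_contra hcon
    push_neg at hcon
    obtain ⟨i, j, l, hij, hil, hjl⟩ := hcon
    have hmemL : ∀ (p q : Fin (n + 1)), v p ≠ v q →
        (fun m => if v m = v p then (((Finset.univ.filter (fun m => v m = v q)).card : ℕ) : k)
          else if v m = v q then -(((Finset.univ.filter (fun m => v m = v p)).card : ℕ) : k)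
          else 0) ∈ Set.range (fun c : k => c • v) := by
      intro p q hpq
      have hsum : (∑ m, (if v m = v p then (((Finset.univ.filter (fun m => v m = v q)).card : ℕ) : k)
          else if v m = v q then -(((Finset.univ.filter (fun m => v m = v p)).card : ℕ) : k)
          else 0)) = 0 := by
        refine sum_pattern
          (fun m => if v m = v p then (((Finset.univ.filter (fun m => v m = v q)).card : ℕ) : k)
            else if v m = v q then -(((Finset.univ.filter (fun m => v m = v p)).card : ℕ) : k)
            else 0) (Finset.univ.filter (fun m => v m = v p))
          (Finset.univ.filter (fun m => v m = v q)) ?_ ?_ ?_ ?_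
        · intro m hm
          simp only [Finset.mem_filter, Finset.mem_univ, true_and] at hm ⊢
          exact fun h => hpq (hm.symm.trans h)
        · intro m hm
          simp only [Finset.mem_filter, Finset.mem_univ, true_and] at hm
          simp [hm]
        · intro m hm
          simp only [Finset.mem_filter, Finset.mem_univ, true_and] at hm
          simp [hm, Ne.symm hpq]
        · intro m hm1 hm2
          simp only [Finset.mem_filter, Finset.mem_univ, true_and] at hm1 hm2
          simp [hm1, hm2]
      rw [hLT]
      exact ⟨hsum, Set.mem_iInter₂.2 fun t ht => ⟨hsum, fun m => by
        simp only [hvinv t ht m]⟩⟩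
    obtain ⟨c₁, hc₁⟩ := hmemL i j hij
    obtain ⟨c₂, hc₂⟩ := hmemL i l hil
    have hNi : (((Finset.univ.filter (fun m => v m = v i)).card : ℕ) : k) ≠ 0 :=
      Nat.cast_ne_zero.2 (Finset.card_ne_zero_of_mem
        (Finset.mem_filter.2 ⟨Finset.mem_univ _, rfl⟩))
    have hNj : (((Finset.univ.filter (fun m => v m = v j)).card : ℕ) : k) ≠ 0 :=
      Nat.cast_ne_zero.2 (Finset.card_ne_zero_of_mem
        (Finset.mem_filter.2 ⟨Finset.mem_univ _, rfl⟩))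
    have hy_i := congrFun hc₁ i
    have hy_l := congrFun hc₁ l
    have hz_l := congrFun hc₂ l
    simp only [Pi.smul_apply, smul_eq_mul, if_true] at hy_i hy_l hz_l
    rw [if_neg (fun h : v l = v i => hil h.symm), if_neg (fun h : v l = v j => hjl h.symm)] at hy_l
    rw [if_neg (fun h : v l = v i => hil h.symm)] at hz_l
    have hc₁0 : c₁ ≠ 0 := by
      intro h
      rw [h, zero_mul] at hy_i
      exact hNj hy_i.symm
    have hvl : v l = 0 := (mul_eq_zero.1 hy_l).resolve_left hc₁0
    rw [hvl, mul_zero] at hz_l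
    exact hNi (neg_eq_zero.1 hz_l.symm)
  have hvab : v a ≠ v b := by
    intro hvab
    apply hLH
    rintro z ⟨c', rfl⟩
    have hzs : (∑ i, (c' • v) i) = 0 := by
      simp only [Pi.smul_apply, smul_eq_mul, ← Finset.mul_sum, hvs', mul_zero]
    exact ⟨hzs, fun m => by simp only [Pi.smul_apply, smul_eq_mul, apply_swap_eq hvab m]⟩
  refine ⟨⟨hx0, ?_, ?_⟩, ?_⟩
  · simp only [Pi.smul_apply, smul_eq_mul, ← Finset.mul_sum, hvs', mul_zero]
  · intro i j l
    rcases h2 i j l with h | h | h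
    · exact Or.inl (by simp only [Pi.smul_apply, smul_eq_mul, h])
    · exact Or.inr (Or.inl (by simp only [Pi.smul_apply, smul_eq_mul, h]))
    · exact Or.inr (Or.inr (by simp only [Pi.smul_apply, smul_eq_mul, h]))
  · intro h
    simp only [Pi.smul_apply, smul_eq_mul] at h
    exact hvab (mul_left_cancel₀ hc0 h)

lemma mem_Vt_iff {a b : Fin (n + 1)} (hab : a ≠ b) {x : Fin (n + 1) → k} :
    x ∈ Vt k n (Equiv.swap a b) ↔ x = 0 ∨ (LV x ∧ x a ≠ x b) := by
  constructor
  · intro hx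
    by_cases hx0 : x = 0
    · exact Or.inl hx0
    · exact Or.inr (lv_of_mem_Vt hx0 hx)
  · rintro (rfl | ⟨hLV, hsep⟩)
    · set u : Fin (n + 1) → k := fun i => (if i = a then ((n : k) + 1) else 0) - 1 with hu
      have hua : u a = (n : k) := by simp [hu]
      have hub : u b = -1 := by
        simp only [hu]
        rw [if_neg (fun h => hab h.symm), zero_sub]
      have hcast : ((n : k) + 1) ≠ 0 := by
        have := card_cast_ne (k := k) (n := n)
        push_cast at this
        exact this
      have hLVu : LV u := by
        refine ⟨?_, ?_, ?_⟩
        · intro h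
          have := congrFun h b
          rw [hub] at this
          exact one_ne_zero (neg_eq_zero.1 this)
        · simp only [hu, Finset.sum_sub_distrib, Finset.sum_ite_eq', Finset.mem_univ,
            if_true, Finset.sum_const, Finset.card_univ, Fintype.card_fin, nsmul_eq_mul,
            mul_one]
          push_cast
          ring
        · intro i j l
          by_cases hi : i = a <;> by_cases hj : j = a <;> by_cases hl : l = a <;>
            simp [hu, hi, hj, hl]
      have hne : u a ≠ u b := by
        rw [hua, hub]
        intro h
        apply hcast
        rw [h]
        exact neg_add_cancel 1
      exact line_subset_Vt hLVu hne ⟨0, zero_smul _ _⟩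
    · exact line_subset_Vt hLV hsep ⟨1, one_smul _ _⟩

lemma mem_Vt_iff' {t : Equiv.Perm (Fin (n + 1))} (ht : IsTransposition t)
    {x : Fin (n + 1) → k} :
    x ∈ Vt k n t ↔ x = 0 ∨ (LV x ∧ x ∘ ⇑t ≠ x) := by
  obtain ⟨a, b, hab, rfl⟩ := ht
  rw [mem_Vt_iff hab, comp_swap_ne_iff]

lemma zero_mem_Vt {t : Equiv.Perm (Fin (n + 1))} (ht : IsTransposition t) :
    (0 : Fin (n + 1) → k) ∈ Vt k n t :=
  (mem_Vt_iff' ht).2 (Or.inl rfl)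

lemma comp_ne_zero {x : Fin (n + 1) → k} (σ : Equiv.Perm (Fin (n + 1))) (hx0 : x ≠ 0) :
    x ∘ ⇑σ ≠ 0 := by
  intro h
  apply hx0
  funext i
  have := congrFun h (σ⁻¹ i)
  simpa using this

lemma LV_comp_of (σ : Equiv.Perm (Fin (n + 1))) {x : Fin (n + 1) → k} (h : LV x) :
    LV (x ∘ ⇑σ) := by
  refine ⟨comp_ne_zero σ h.1, ?_, fun i j l => h.2.2 (σ i) (σ j) (σ l)⟩
  have he : (∑ i, (x ∘ ⇑σ) i) = ∑ i, x (σ i) := rfl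
  rw [he, Equiv.sum_comp σ x, h.2.1]

lemma LV_comp (σ : Equiv.Perm (Fin (n + 1))) {x : Fin (n + 1) → k} :
    LV (x ∘ ⇑σ) ↔ LV x := by
  refine ⟨fun h => ?_, LV_comp_of σ⟩
  have := LV_comp_of σ⁻¹ h
  rwa [show (x ∘ ⇑σ) ∘ ⇑σ⁻¹ = x from funext fun i => by simp] at this

lemma mem_permSet {σ : Equiv.Perm (Fin (n + 1))} {W : Set (Fin (n + 1) → k)}
    {x : Fin (n + 1) → k} :
    x ∈ permSet k n σ W ↔ x ∘ ⇑σ⁻¹ ∈ W := by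
  constructor
  · rintro ⟨w, hw, rfl⟩
    have : (w ∘ ⇑σ) ∘ ⇑σ⁻¹ = w := funext fun i => by simp
    rwa [this]
  · intro h
    exact ⟨x ∘ ⇑σ⁻¹, h, funext fun i => by simp⟩

section PermLemmas
variable {α : Type} [DecidableEq α]

lemma eq_swap_of_moves {σ : Equiv.Perm α} (hσ : IsTransposition σ) {i : α}
    (h : σ i ≠ i) : σ = Equiv.swap i (σ i) := by
  obtain ⟨a, b, hab, rfl⟩ := hσ
  by_cases hia : i = a
  · subst hia
    rw [Equiv.swap_apply_left]
  · by_cases hib : i = b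
    · subst hib
      rw [Equiv.swap_apply_right, Equiv.swap_comm]
    · exact absurd (Equiv.swap_apply_of_ne_of_ne hia hib) h

lemma unique_mover {t t' : Equiv.Perm α} (ht : IsTransposition t)
    (ht' : IsTransposition t') (hc : t * t' = t' * t) {i : α}
    (h1 : t i ≠ i) (h2 : t' i ≠ i) : t = t' := by
  have e1 := eq_swap_of_moves ht h1
  have e2 := eq_swap_of_moves ht' h2
  by_contra hne
  have hval : t i ≠ t' i := by
    intro h
    apply hne
    rw [e1, e2, h]
  have h3 : t (t' i) = t' (t i) := by
    have := congrArg (fun σ : Equiv.Perm α => σ i) hc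
    simpa [Equiv.Perm.mul_apply] using this
  have h4 : t (t' i) = t' i := by
    conv_lhs => rw [e1]
    exact Equiv.swap_apply_of_ne_of_ne h2 (fun h => hval h.symm)
  have h5 : t' (t i) = t i := by
    conv_lhs => rw [e2]
    exact Equiv.swap_apply_of_ne_of_ne h1 hval
  rw [h4, h5] at h3
  exact hval h3.symm

lemma fixes_of_commute {t t' : Equiv.Perm α} (ht : IsTransposition t)
    (ht' : IsTransposition t') (hc : t * t' = t' * t) (hne : t ≠ t') {i : α}
    (h : t i ≠ i) : t' i = i := by
  by_contra h2
  exact hne (unique_mover ht ht' hc h h2)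

lemma commute_of_fixes {σ : Equiv.Perm α} {c d : α} (hc : σ c = c) (hd : σ d = d) :
    σ * Equiv.swap c d = Equiv.swap c d * σ := by
  ext i
  simp only [Equiv.Perm.mul_apply]
  rcases eq_or_ne i c with rfl | hic
  · rw [Equiv.swap_apply_left, hd, hc, Equiv.swap_apply_left]
  rcases eq_or_ne i d with rfl | hid
  · rw [Equiv.swap_apply_right, hc, hd, Equiv.swap_apply_right]
  · rw [Equiv.swap_apply_of_ne_of_ne hic hid,
      Equiv.swap_apply_of_ne_of_ne
        (fun h => hic (σ.injective (h.trans hc.symm)))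
        (fun h => hid (σ.injective (h.trans hd.symm)))]

lemma trans_structure {a b : α} (hab : a ≠ b) {t : Equiv.Perm α}
    (ht : IsTransposition t) (h : Equiv.swap a b * t ≠ t * Equiv.swap a b) :
    ∃ c, c ≠ a ∧ c ≠ b ∧ (t = Equiv.swap a c ∨ t = Equiv.swap b c) := by
  by_cases hta : t a = a
  · by_cases htb : t b = b
    · exact absurd (commute_of_fixes hta htb).symm h
    · have e := eq_swap_of_moves ht htb
      have hca : t b ≠ a := by
        intro hc
        have h2 := Equiv.swap_apply_right b (t b)
        rw [← e] at h2
        rw [hc, hta] at h2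
        exact hab h2
      exact ⟨t b, hca, htb, Or.inr e⟩
  · have e := eq_swap_of_moves ht hta
    have hcb : t a ≠ b := by
      intro hc
      rw [hc] at e
      exact h (by rw [e])
    exact ⟨t a, hta, hcb, Or.inl e⟩

end PermLemmas

lemma sep_conj_comm {a b : Fin (n + 1)} (hab : a ≠ b) {t : Equiv.Perm (Fin (n + 1))}
    (ht : IsTransposition t) (hc : Equiv.swap a b * t = t * Equiv.swap a b)
    (x : Fin (n + 1) → k) :
    (x ∘ ⇑(Equiv.swap a b)) ∘ ⇑t ≠ x ∘ ⇑(Equiv.swap a b) ↔ x ∘ ⇑t ≠ x := by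
  obtain ⟨p, q, hpq, rfl⟩ := ht
  rw [comp_swap_ne_iff, comp_swap_ne_iff]
  have hsab : IsTransposition (Equiv.swap a b) := ⟨a, b, hab, rfl⟩
  have hspq : IsTransposition (Equiv.swap p q) := ⟨p, q, hpq, rfl⟩
  by_cases hmp : Equiv.swap a b p = p
  · by_cases hmq : Equiv.swap a b q = q
    · simp only [Function.comp_apply, hmp, hmq]
    · have hst : Equiv.swap a b = Equiv.swap p q :=
        unique_mover hsab hspq hc hmq (by rw [Equiv.swap_apply_right]; exact hpq)
      rw [hst]
      simp only [Function.comp_apply, Equiv.swap_apply_left, Equiv.swap_apply_right]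
      exact ne_comm
  · have hst : Equiv.swap a b = Equiv.swap p q :=
      unique_mover hsab hspq hc hmp (by rw [Equiv.swap_apply_left]; exact fun h => hpq h.symm)
    rw [hst]
    simp only [Function.comp_apply, Equiv.swap_apply_left, Equiv.swap_apply_right]
    exact ne_comm

lemma core3 {x : Fin (n + 1) → k}
    (h2 : ∀ i j l : Fin (n + 1), x i = x j ∨ x i = x l ∨ x j = x l)
    {a b c d : Fin (n + 1)} (hab : x a ≠ x b) :
    ((x a ≠ x c ∧ x b ≠ x d) ∨ (x b ≠ x c ∧ x a ≠ x d)) ↔ x c ≠ x d := by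
  have hc := h2 c a b
  have hd := h2 d a b
  constructor
  · rintro (⟨h1, h1'⟩ | ⟨h1, h1'⟩) heq
    · have hcb : x c = x b := by
        rcases hc with h | h | h
        · exact (h1 h.symm).elim
        · exact h
        · exact (hab h).elim
      have hda : x d = x a := by
        rcases hd with h | h | h
        · exact h
        · exact (h1' h.symm).elim
        · exact (hab h).elim
      exact hab (hda.symm.trans (heq.symm.trans hcb))
    · have hca : x c = x a := by
        rcases hc with h | h | h
        · exact h
        · exact (h1 h.symm).elim
        · exact (hab h).elim
      have hdb : x d = x b := by
        rcases hd with h | h | h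
        · exact (h1' h.symm).elim
        · exact h
        · exact (hab h).elim
      exact hab (hca.symm.trans (heq.trans hdb))
  · intro hne
    rcases hc with h | h | h
    · exact Or.inr ⟨fun hb => hab (hb.trans h).symm, fun had => hne (h.trans had)⟩
    · exact Or.inl ⟨fun ha => hab (ha.trans h), fun hbd => hne (h.trans hbd)⟩
    · exact (hab h).elim

open Fin.NatCast in
lemma exists_good (hn : 1 ≤ n) {Q : Set (Equiv.Perm (Fin (n + 1)))}
    (hQ : CommTranspositions n Q) :
    ∃ x : Fin (n + 1) → k, LV x ∧ ∀ t ∈ Q, x ∘ ⇑t ≠ x := by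
  classical
  set P : Fin (n + 1) → Prop :=
    fun i => (∃ t ∈ Q, t i ≠ i ∧ i < t i) ∨ ((∀ t ∈ Q, t i = i) ∧ i = 0) with hP
  set B : Finset (Fin (n + 1)) := Finset.univ.filter P with hB
  set x : Fin (n + 1) → k := fun i => if P i then (Bᶜ.card : k) else -(B.card : k) with hx
  have hinv : ∀ t ∈ Q, ∀ i, t i ≠ i → t (t i) = i := by
    intro t ht i hti
    have h2 := Equiv.swap_apply_right i (t i)
    rw [← eq_swap_of_moves (hQ.1 t ht) hti] at h2
    exact h2
  have hnotP : ∀ t ∈ Q, ∀ i, t i ≠ i → i < t i → ¬ P (t i) := by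
    intro t ht i hti hlt hPti
    have htti : t (t i) = i := hinv t ht i hti
    rcases hPti with ⟨t', ht', h1, h2⟩ | ⟨h1, h2⟩
    · have hmoves : t (t i) ≠ t i := by rw [htti]; exact fun h => hti h.symm
      have heq : t = t' := by
        by_cases he : t = t'
        · exact he
        · exact unique_mover (hQ.1 t ht) (hQ.1 t' ht') (hQ.2 t ht t' ht') hmoves h1
      rw [← heq, htti] at h2
      exact absurd hlt (lt_asymm h2)
    · rw [h1 t ht] at htti
      exact hti htti
  have hPmin : ∀ t ∈ Q, ∀ i, t i ≠ i → i < t i → P i :=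
    fun t ht i h1 h2 => Or.inl ⟨t, ht, h1, h2⟩
  have hP0 : P 0 := by
    by_cases h0 : ∃ t ∈ Q, t 0 ≠ 0
    · obtain ⟨t, ht, h⟩ := h0
      exact hPmin t ht 0 h (Fin.pos_of_ne_zero h)
    · push_neg at h0
      exact Or.inr ⟨h0, rfl⟩
  have hBne : B.card ≠ 0 :=
    Finset.card_ne_zero_of_mem (Finset.mem_filter.2 ⟨Finset.mem_univ _, hP0⟩)
  have hBcne : Bᶜ.card ≠ 0 := by
    have hw : ∃ w, ¬ P w := by
      by_cases h0 : ∃ t ∈ Q, t 0 ≠ 0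
      · obtain ⟨t, ht, h⟩ := h0
        exact ⟨t 0, hnotP t ht 0 h (Fin.pos_of_ne_zero h)⟩
      · push_neg at h0
        have h1n : ((1 : ℕ) : Fin (n + 1)) ≠ 0 := by
          have : (1 : ℕ) < n + 1 := by omega
          simp [Fin.ext_iff, Nat.mod_eq_of_lt this]
        by_cases hPe : P ((1 : ℕ) : Fin (n + 1))
        · rcases hPe with ⟨t, ht, h1, h2⟩ | ⟨h1, h2⟩
          · exact ⟨t ((1 : ℕ) : Fin (n + 1)), hnotP t ht _ h1 h2⟩
          · exact absurd h2 h1n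
        · exact ⟨((1 : ℕ) : Fin (n + 1)), hPe⟩
    obtain ⟨w, hw⟩ := hw
    refine Finset.card_ne_zero_of_mem (a := w) (Finset.mem_compl.2 ?_)
    simp only [hB, Finset.mem_filter, Finset.mem_univ, true_and]
    exact hw
  have hvals : ((Bᶜ.card : ℕ) : k) ≠ -((B.card : ℕ) : k) := by
    intro h
    have h2 : ((Bᶜ.card + B.card : ℕ) : k) = 0 := by push_cast; rw [h]; ring
    rw [Nat.cast_eq_zero] at h2
    omega
  refine ⟨x, ⟨?_, ?_, ?_⟩, ?_⟩
  · intro h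
    have h0 : x 0 = ((Bᶜ.card : ℕ) : k) := if_pos hP0
    have hcf := congrFun h 0
    rw [h0] at hcf
    exact Nat.cast_ne_zero.2 hBcne hcf
  · have hfilterc : Finset.univ.filter (fun i => ¬ P i) = Bᶜ := by
      ext m
      simp [hB, Finset.mem_filter, Finset.mem_compl]
    have e1 : ∀ i ∈ Finset.univ.filter P, x i = ((Bᶜ.card : ℕ) : k) :=
      fun i hi => if_pos (Finset.mem_filter.1 hi).2
    have e2 : ∀ i ∈ Finset.univ.filter (fun i => ¬ P i), x i = -((B.card : ℕ) : k) :=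
      fun i hi => if_neg (Finset.mem_filter.1 hi).2
    rw [← Finset.sum_filter_add_sum_filter_not Finset.univ P x,
      Finset.sum_congr rfl e1, Finset.sum_congr rfl e2, Finset.sum_const, Finset.sum_const,
      hfilterc, ← hB, nsmul_eq_mul, nsmul_eq_mul]
    ring
  · intro i j l
    have e : ∀ m, x m = if P m then ((Bᶜ.card : ℕ) : k) else -((B.card : ℕ) : k) :=
      fun m => rfl
    rw [e i, e j, e l]
    by_cases hi : P i <;> by_cases hj : P j <;> by_cases hl : P l <;>
      simp [hi, hj, hl]
  · intro t ht
    obtain ⟨p, q, hpq, htE⟩ := hQ.1 t ht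
    rw [htE, comp_swap_ne_iff]
    have htp : t p = q := by rw [htE]; exact Equiv.swap_apply_left p q
    have htq : t q = p := by rw [htE]; exact Equiv.swap_apply_right p q
    have htpne : t p ≠ p := by rw [htp]; exact fun h => hpq h.symm
    have htqne : t q ≠ q := by rw [htq]; exact hpq
    rcases lt_or_gt_of_ne hpq with hlt | hlt
    · have h1 : P p := hPmin t ht p htpne (by rw [htp]; exact hlt)
      have h2 : ¬ P q := by
        have := hnotP t ht p htpne (by rw [htp]; exact hlt)
        rwa [htp] at this
      rw [show x p = ((Bᶜ.card : ℕ) : k) from if_pos h1,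
        show x q = -((B.card : ℕ) : k) from if_neg h2]
      exact hvals
    · have h1 : P q := hPmin t ht q htqne (by rw [htq]; exact hlt)
      have h2 : ¬ P p := by
        have := hnotP t ht q htqne (by rw [htq]; exact hlt)
        rwa [htq] at this
      rw [show x q = ((Bᶜ.card : ℕ) : k) from if_pos h1,
        show x p = -((B.card : ℕ) : k) from if_neg h2]
      exact fun h => hvals h.symm

lemma exists_nonzero_mem (hn : 1 ≤ n) {Q : Set (Equiv.Perm (Fin (n + 1)))}
    (hQ : CommTranspositions n Q) :
    ∃ x : Fin (n + 1) → k, x ≠ 0 ∧ x ∈ ⋂ t ∈ Q, Vt k n t := by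
  obtain ⟨x, hLV, hsep⟩ := exists_good (k := k) hn hQ
  exact ⟨x, hLV.1, Set.mem_iInter₂.2 fun t ht =>
    (mem_Vt_iff' (hQ.1 t ht)).2 (Or.inr ⟨hLV, hsep t ht⟩)⟩

lemma inter_ne_zero (hn : 1 ≤ n) {Q : Set (Equiv.Perm (Fin (n + 1)))}
    (hQ : CommTranspositions n Q) :
    (⋂ t ∈ Q, Vt k n t) ≠ {0} := by
  obtain ⟨x, hx0, hxm⟩ := exists_nonzero_mem (k := k) hn hQ
  intro h
  rw [h] at hxm
  exact hx0 hxm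

lemma hW_iff {Q : Set (Equiv.Perm (Fin (n + 1)))} (hQ : CommTranspositions n Q)
    {y : Fin (n + 1) → k} (hy : y ≠ 0) :
    y ∈ (⋂ t ∈ Q, Vt k n t) ↔ ∀ t ∈ Q, LV y ∧ y ∘ ⇑t ≠ y := by
  rw [Set.mem_iInter₂]
  constructor
  · intro h t ht
    rcases (mem_Vt_iff' (hQ.1 t ht)).1 (h t ht) with h0 | h1
    · exact absurd h0 hy
    · exact h1
  · intro h t ht
    exact (mem_Vt_iff' (hQ.1 t ht)).2 (Or.inr (h t ht))

lemma lhs_iff {Q : Set (Equiv.Perm (Fin (n + 1)))} (hQ : CommTranspositions n Q)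
    {a b : Fin (n + 1)} (hab : a ≠ b) {x : Fin (n + 1) → k} (hx0 : x ≠ 0) :
    x ∈ Vt k n (Equiv.swap a b) ∩
      ((⋂ t ∈ Q, Vt k n t) ∪ permSet k n (Equiv.swap a b) (⋂ t ∈ Q, Vt k n t)) ↔
    LV x ∧ x a ≠ x b ∧
      ((∀ t ∈ Q, x ∘ ⇑t ≠ x) ∨
        ∀ t ∈ Q, (x ∘ ⇑(Equiv.swap a b)) ∘ ⇑t ≠ x ∘ ⇑(Equiv.swap a b)) := by
  have hxs0 : x ∘ ⇑(Equiv.swap a b) ≠ 0 := comp_ne_zero _ hx0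
  constructor
  · rintro ⟨h1, h2⟩
    rcases (mem_Vt_iff hab).1 h1 with h0 | ⟨hLV, hsep⟩
    · exact absurd h0 hx0
    refine ⟨hLV, hsep, ?_⟩
    rcases h2 with h2 | h2
    · exact Or.inl fun t ht => ((hW_iff hQ hx0).1 h2 t ht).2
    · rw [mem_permSet, Equiv.swap_inv] at h2
      exact Or.inr fun t ht => ((hW_iff hQ hxs0).1 h2 t ht).2
  · rintro ⟨hLV, hsep, h | h⟩
    · exact ⟨(mem_Vt_iff hab).2 (Or.inr ⟨hLV, hsep⟩),
        Or.inl ((hW_iff hQ hx0).2 fun t ht => ⟨hLV, h t ht⟩)⟩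
    · refine ⟨(mem_Vt_iff hab).2 (Or.inr ⟨hLV, hsep⟩), Or.inr ?_⟩
      rw [mem_permSet, Equiv.swap_inv]
      exact (hW_iff hQ hxs0).2 fun t ht => ⟨LV_comp_of _ hLV, h t ht⟩

lemma rhs_zero_mem {Q' : Set (Equiv.Perm (Fin (n + 1)))}
    (hQ' : ∀ t ∈ Q', IsTransposition t) :
    (0 : Fin (n + 1) → k) ∈ ⋂ t ∈ Q', Vt k n t :=
  Set.mem_iInter₂.2 fun t ht => zero_mem_Vt (hQ' t ht)

lemma rhs_iff {Q' : Set (Equiv.Perm (Fin (n + 1)))}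
    (hQ' : ∀ t ∈ Q', IsTransposition t) {x : Fin (n + 1) → k} (hx0 : x ≠ 0) :
    x ∈ (⋂ t ∈ Q', Vt k n t) ↔ ∀ t ∈ Q', LV x ∧ x ∘ ⇑t ≠ x := by
  rw [Set.mem_iInter₂]
  constructor
  · intro h t ht
    rcases (mem_Vt_iff' (hQ' t ht)).1 (h t ht) with h0 | h1
    · exact absurd h0 hx0
    · exact h1
  · intro h t ht
    exact (mem_Vt_iff' (hQ' t ht)).2 (Or.inr (h t ht))

lemma rule3_main {Q : Set (Equiv.Perm (Fin (n + 1)))} (hQ : CommTranspositions n Q)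
    {a b c d : Fin (n + 1)} (hab : a ≠ b) (hca : c ≠ a) (hcb : c ≠ b)
    (hda : d ≠ a) (hdb : d ≠ b) (hcd : c ≠ d)
    {t t' : Equiv.Perm (Fin (n + 1))} (htQ : t ∈ Q) (ht'Q : t' ∈ Q) (htt' : t ≠ t')
    (hteq : t = Equiv.swap a c) (ht'eq : t' = Equiv.swap b d)
    (hother : ∀ r ∈ Q, r ≠ t → r ≠ t' → Equiv.swap a b * r = r * Equiv.swap a b) :
    (Vt k n (Equiv.swap a b) ∩
      ((⋂ r ∈ Q, Vt k n r) ∪ permSet k n (Equiv.swap a b) (⋂ r ∈ Q, Vt k n r)) =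
      ⋂ r ∈ ((Q \ {t, t'}) ∪ {Equiv.swap a b, t * t' * Equiv.swap a b * t' * t}), Vt k n r) ∧
    CommTranspositions n
      ((Q \ {t, t'}) ∪ {Equiv.swap a b, t * t' * Equiv.swap a b * t' * t}) := by
  classical
  have hsab : IsTransposition (Equiv.swap a b) := ⟨a, b, hab, rfl⟩
  have hr'' : t * t' * Equiv.swap a b * t' * t = Equiv.swap c d := by
    have h1 := Equiv.swap_apply_apply (t * t') a b
    have hinv : (t * t')⁻¹ = t' * t := by
      rw [mul_inv_rev, hteq, ht'eq, Equiv.swap_inv, Equiv.swap_inv]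
    have ha' : (t * t') a = c := by
      rw [Equiv.Perm.mul_apply, ht'eq, hteq,
        Equiv.swap_apply_of_ne_of_ne hab (Ne.symm hda), Equiv.swap_apply_left]
    have hb' : (t * t') b = d := by
      rw [Equiv.Perm.mul_apply, ht'eq, hteq, Equiv.swap_apply_left,
        Equiv.swap_apply_of_ne_of_ne hda (Ne.symm hcd)]
    rw [hinv, ha', hb'] at h1
    rw [h1]
    simp [mul_assoc]
  rw [hr'']
  -- basic transpositions of the new set
  have hQ' : ∀ r ∈ (Q \ ({t, t'} : Set _)) ∪ {Equiv.swap a b, Equiv.swap c d},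
      IsTransposition r := by
    rintro r hr
    rcases hr with ⟨hrQ, -⟩ | hr
    · exact hQ.1 r hrQ
    · rcases hr with rfl | rfl
      · exact hsab
      · exact ⟨c, d, hcd, rfl⟩
  -- fixed points of other elements
  have hfix : ∀ r ∈ Q, r ≠ t → r ≠ t' → r c = c ∧ r d = d := by
    intro r hr h1 h2
    constructor
    · refine fixes_of_commute (hQ.1 t htQ) (hQ.1 r hr) (hQ.2 t htQ r hr) (fun h => h1 h.symm) ?_
      rw [hteq, Equiv.swap_apply_right]
      exact Ne.symm hca
    · refine fixes_of_commute (hQ.1 t' ht'Q) (hQ.1 r hr) (hQ.2 t' ht'Q r hr) (fun h => h2 h.symm) ?_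
      rw [ht'eq, Equiv.swap_apply_right]
      exact Ne.symm hdb
  have exs : ∀ (x : Fin (n + 1) → k),
      (x ∘ ⇑(Equiv.swap a b)) a = x b ∧ (x ∘ ⇑(Equiv.swap a b)) b = x a ∧
      (x ∘ ⇑(Equiv.swap a b)) c = x c ∧ (x ∘ ⇑(Equiv.swap a b)) d = x d := by
    intro x
    refine ⟨?_, ?_, ?_, ?_⟩
    · simp only [Function.comp_apply, Equiv.swap_apply_left]
    · simp only [Function.comp_apply, Equiv.swap_apply_right]
    · simp only [Function.comp_apply, Equiv.swap_apply_of_ne_of_ne hca hcb]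
    · simp only [Function.comp_apply, Equiv.swap_apply_of_ne_of_ne hda hdb]
  constructor
  · ext x
    by_cases hx0 : x = 0
    · subst hx0
      exact iff_of_true ⟨zero_mem_Vt hsab, Or.inl (rhs_zero_mem hQ.1)⟩ (rhs_zero_mem hQ')
    rw [lhs_iff hQ hab hx0, rhs_iff hQ' hx0]
    obtain ⟨ea, eb, ec, ed⟩ := exs x
    constructor
    · rintro ⟨hLV, hsep, h⟩ r hr
      rcases hr with ⟨hrQ, hrne⟩ | hr
      · simp only [Set.mem_insert_iff, Set.mem_singleton_iff, not_or] at hrne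
        obtain ⟨hrt, hrt'⟩ := hrne
        refine ⟨hLV, ?_⟩
        rcases h with h | h
        · exact h r hrQ
        · exact (sep_conj_comm hab (hQ.1 r hrQ) (hother r hrQ hrt hrt') x).1 (h r hrQ)
      · rcases hr with rfl | rfl
        · exact ⟨hLV, comp_swap_ne_iff.2 hsep⟩
        · refine ⟨hLV, comp_swap_ne_iff.2 ?_⟩
          refine (core3 hLV.2.2 hsep).1 ?_
          rcases h with h | h
          · refine Or.inl ⟨?_, ?_⟩
            · have := h t htQ
              rw [hteq, comp_swap_ne_iff] at this
              exact this
            · have := h t' ht'Q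
              rw [ht'eq, comp_swap_ne_iff] at this
              exact this
          · refine Or.inr ⟨?_, ?_⟩
            · have := h t htQ
              rw [hteq, comp_swap_ne_iff, ea, ec] at this
              exact this
            · have := h t' ht'Q
              rw [ht'eq, comp_swap_ne_iff, eb, ed] at this
              exact this
    · intro h
      have hs' := h (Equiv.swap a b) (Or.inr (Or.inl rfl))
      have hcd' := h (Equiv.swap c d) (Or.inr (Or.inr rfl))
      have hLV := hs'.1
      have hsep : x a ≠ x b := comp_swap_ne_iff.1 hs'.2
      have hxcd : x c ≠ x d := comp_swap_ne_iff.1 hcd'.2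
      have hrest : ∀ r ∈ Q, r ≠ t → r ≠ t' → x ∘ ⇑r ≠ x := by
        intro r hr h1 h2
        exact (h r (Or.inl ⟨hr, by simp [h1, h2]⟩)).2
      refine ⟨hLV, hsep, ?_⟩
      rcases (core3 hLV.2.2 hsep).2 hxcd with ⟨h1, h2⟩ | ⟨h1, h2⟩
      · refine Or.inl fun r hr => ?_
        by_cases hrt : r = t
        · subst hrt
          rw [hteq, comp_swap_ne_iff]
          exact h1
        by_cases hrt' : r = t'
        · subst hrt'
          rw [ht'eq, comp_swap_ne_iff]
          exact h2
        · exact hrest r hr hrt hrt'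
      · refine Or.inr fun r hr => ?_
        by_cases hrt : r = t
        · subst hrt
          rw [hteq, comp_swap_ne_iff, ea, ec]
          exact h1
        by_cases hrt' : r = t'
        · subst hrt'
          rw [ht'eq, comp_swap_ne_iff, eb, ed]
          exact h2
        · exact (sep_conj_comm hab (hQ.1 r hr) (hother r hr hrt hrt') x).2
            (hrest r hr hrt hrt')
  · refine ⟨hQ', ?_⟩
    have hcomm_s_cd : Equiv.swap a b * Equiv.swap c d =
        Equiv.swap c d * Equiv.swap a b :=
      commute_of_fixes (Equiv.swap_apply_of_ne_of_ne hca hcb)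
        (Equiv.swap_apply_of_ne_of_ne hda hdb)
    have hcommQcd : ∀ r ∈ Q, r ≠ t → r ≠ t' →
        Equiv.swap c d * r = r * Equiv.swap c d := by
      intro r hr h1 h2
      obtain ⟨hc', hd'⟩ := hfix r hr h1 h2
      exact (commute_of_fixes hc' hd').symm
    rintro u hu u' hu'
    rcases hu with ⟨huQ, hune⟩ | hu
    · simp only [Set.mem_insert_iff, Set.mem_singleton_iff, not_or] at hune
      obtain ⟨h1, h2⟩ := hune
      rcases hu' with ⟨hu'Q, hu'ne⟩ | hu'
      · exact hQ.2 u huQ u' hu'Q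
      · rcases hu' with rfl | rfl
        · exact (hother u huQ h1 h2).symm
        · exact (hcommQcd u huQ h1 h2).symm
    · rcases hu' with ⟨hu'Q, hu'ne⟩ | hu'
      · simp only [Set.mem_insert_iff, Set.mem_singleton_iff, not_or] at hu'ne
        obtain ⟨h1, h2⟩ := hu'ne
        rcases hu with rfl | rfl
        · exact hother u' hu'Q h1 h2
        · exact hcommQcd u' hu'Q h1 h2
      · rcases hu with rfl | rfl <;> rcases hu' with rfl | rfl
        · rfl
        · exact hcomm_s_cd
        · exact hcomm_s_cd.symm
        · rfl

lemma rule1_main {Q : Set (Equiv.Perm (Fin (n + 1)))} (hQ : CommTranspositions n Q)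
    {a b : Fin (n + 1)} (hab : a ≠ b)
    (hall : ∀ t ∈ Q, Equiv.swap a b * t = t * Equiv.swap a b) :
    (Vt k n (Equiv.swap a b) ∩
      ((⋂ t ∈ Q, Vt k n t) ∪ permSet k n (Equiv.swap a b) (⋂ t ∈ Q, Vt k n t)) =
      ⋂ t ∈ (Q ∪ {Equiv.swap a b}), Vt k n t) ∧
    CommTranspositions n (Q ∪ {Equiv.swap a b}) := by
  classical
  have hsab : IsTransposition (Equiv.swap a b) := ⟨a, b, hab, rfl⟩
  have hQ' : ∀ t ∈ Q ∪ {Equiv.swap a b}, IsTransposition t := by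
    rintro t (ht | ht)
    · exact hQ.1 t ht
    · rw [Set.mem_singleton_iff] at ht
      subst ht
      exact hsab
  constructor
  · ext x
    by_cases hx0 : x = 0
    · subst hx0
      exact iff_of_true ⟨zero_mem_Vt hsab, Or.inl (rhs_zero_mem hQ.1)⟩ (rhs_zero_mem hQ')
    rw [lhs_iff hQ hab hx0, rhs_iff hQ' hx0]
    constructor
    · rintro ⟨hLV, hsep, h⟩ t ht
      rcases ht with ht | ht
      · refine ⟨hLV, ?_⟩
        rcases h with h | h
        · exact h t ht
        · exact (sep_conj_comm hab (hQ.1 t ht) (hall t ht) x).1 (h t ht)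
      · rw [Set.mem_singleton_iff] at ht
        subst ht
        exact ⟨hLV, comp_swap_ne_iff.2 hsep⟩
    · intro h
      have hs' := h (Equiv.swap a b) (Or.inr rfl)
      exact ⟨hs'.1, comp_swap_ne_iff.1 hs'.2, Or.inl fun t ht => (h t (Or.inl ht)).2⟩
  · refine ⟨hQ', ?_⟩
    rintro u (hu | hu) u' (hu' | hu')
    · exact hQ.2 u hu u' hu'
    · rw [Set.mem_singleton_iff] at hu'
      subst hu'
      exact (hall u hu).symm
    · rw [Set.mem_singleton_iff] at hu
      subst hu
      exact hall u' hu'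
    · rw [Set.mem_singleton_iff] at hu hu'
      subst hu
      subst hu'
      rfl

lemma rule2_main {Q : Set (Equiv.Perm (Fin (n + 1)))} (hQ : CommTranspositions n Q)
    {a b : Fin (n + 1)} (hab : a ≠ b) {t₀ : Equiv.Perm (Fin (n + 1))} (ht₀ : t₀ ∈ Q)
    (hnc : Equiv.swap a b * t₀ ≠ t₀ * Equiv.swap a b)
    (hother : ∀ t' ∈ Q, t' ≠ t₀ → Equiv.swap a b * t' = t' * Equiv.swap a b) :
    (Vt k n (Equiv.swap a b) ∩
      ((⋂ r ∈ Q, Vt k n r) ∪ permSet k n (Equiv.swap a b) (⋂ r ∈ Q, Vt k n r)) =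
      ⋂ r ∈ ((Q \ {t₀}) ∪ {Equiv.swap a b}), Vt k n r) ∧
    CommTranspositions n ((Q \ {t₀}) ∪ {Equiv.swap a b}) := by
  classical
  have hsab : IsTransposition (Equiv.swap a b) := ⟨a, b, hab, rfl⟩
  obtain ⟨c, hca, hcb, hcase⟩ := trans_structure hab (hQ.1 t₀ ht₀) hnc
  have hQ' : ∀ r ∈ (Q \ ({t₀} : Set _)) ∪ {Equiv.swap a b}, IsTransposition r := by
    rintro r (⟨hrQ, -⟩ | hr)
    · exact hQ.1 r hrQ
    · rw [Set.mem_singleton_iff] at hr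
      subst hr
      exact hsab
  constructor
  · ext x
    by_cases hx0 : x = 0
    · subst hx0
      exact iff_of_true ⟨zero_mem_Vt hsab, Or.inl (rhs_zero_mem hQ.1)⟩ (rhs_zero_mem hQ')
    rw [lhs_iff hQ hab hx0, rhs_iff hQ' hx0]
    have ea : (x ∘ ⇑(Equiv.swap a b)) a = x b := by
      simp only [Function.comp_apply, Equiv.swap_apply_left]
    have eb : (x ∘ ⇑(Equiv.swap a b)) b = x a := by
      simp only [Function.comp_apply, Equiv.swap_apply_right]
    have ec : (x ∘ ⇑(Equiv.swap a b)) c = x c := by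
      simp only [Function.comp_apply, Equiv.swap_apply_of_ne_of_ne hca hcb]
    constructor
    · rintro ⟨hLV, hsep, h⟩ r hr
      rcases hr with ⟨hrQ, hrne⟩ | hr
      · rw [Set.mem_singleton_iff] at hrne
        refine ⟨hLV, ?_⟩
        rcases h with h | h
        · exact h r hrQ
        · exact (sep_conj_comm hab (hQ.1 r hrQ) (hother r hrQ hrne) x).1 (h r hrQ)
      · rw [Set.mem_singleton_iff] at hr
        subst hr
        exact ⟨hLV, comp_swap_ne_iff.2 hsep⟩
    · intro h
      have hs' := h (Equiv.swap a b) (Or.inr rfl)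
      have hLV := hs'.1
      have hsep : x a ≠ x b := comp_swap_ne_iff.1 hs'.2
      have hrest : ∀ r ∈ Q, r ≠ t₀ → x ∘ ⇑r ≠ x := by
        intro r hr hne
        exact (h r (Or.inl ⟨hr, hne⟩)).2
      refine ⟨hLV, hsep, ?_⟩
      rcases hcase with rfl | rfl
      · by_cases hxac : x a = x c
        · refine Or.inr fun r hr => ?_
          by_cases hre : r = Equiv.swap a c
          · subst hre
            rw [comp_swap_ne_iff, ea, ec]
            intro h'
            exact hsep (hxac.trans h'.symm)
          · exact (sep_conj_comm hab (hQ.1 r hr) (hother r hr hre) x).2 (hrest r hr hre)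
        · refine Or.inl fun r hr => ?_
          by_cases hre : r = Equiv.swap a c
          · subst hre
            exact comp_swap_ne_iff.2 hxac
          · exact hrest r hr hre
      · by_cases hxbc : x b = x c
        · refine Or.inr fun r hr => ?_
          by_cases hre : r = Equiv.swap b c
          · subst hre
            rw [comp_swap_ne_iff, eb, ec]
            intro h'
            exact hsep (h'.trans hxbc.symm)
          · exact (sep_conj_comm hab (hQ.1 r hr) (hother r hr hre) x).2 (hrest r hr hre)
        · refine Or.inl fun r hr => ?_
          by_cases hre : r = Equiv.swap b c
          · subst hre
            exact comp_swap_ne_iff.2 hxbc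
          · exact hrest r hr hre
  · refine ⟨hQ', ?_⟩
    rintro u hu u' hu'
    rcases hu with ⟨huQ, hune⟩ | hu
    · rw [Set.mem_singleton_iff] at hune
      rcases hu' with ⟨hu'Q, hu'ne⟩ | hu'
      · exact hQ.2 u huQ u' hu'Q
      · rw [Set.mem_singleton_iff] at hu'
        subst hu'
        exact (hother u huQ hune).symm
    · rw [Set.mem_singleton_iff] at hu
      subst hu
      rcases hu' with ⟨hu'Q, hu'ne⟩ | hu'
      · rw [Set.mem_singleton_iff] at hu'ne
        exact hother u' hu'Q hu'ne
      · rw [Set.mem_singleton_iff] at hu'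
        subst hu'
        rfl

lemma rule3_full {Q : Set (Equiv.Perm (Fin (n + 1)))} (hQ : CommTranspositions n Q)
    {a b : Fin (n + 1)} (hab : a ≠ b)
    {t t' : Equiv.Perm (Fin (n + 1))} (htQ : t ∈ Q) (ht'Q : t' ∈ Q) (htt' : t ≠ t')
    (hnt : Equiv.swap a b * t ≠ t * Equiv.swap a b)
    (hnt' : Equiv.swap a b * t' ≠ t' * Equiv.swap a b) :
    (Vt k n (Equiv.swap a b) ∩
      ((⋂ r ∈ Q, Vt k n r) ∪ permSet k n (Equiv.swap a b) (⋂ r ∈ Q, Vt k n r)) =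
      ⋂ r ∈ ((Q \ {t, t'}) ∪ {Equiv.swap a b, t * t' * Equiv.swap a b * t' * t}), Vt k n r) ∧
    CommTranspositions n
      ((Q \ {t, t'}) ∪ {Equiv.swap a b, t * t' * Equiv.swap a b * t' * t}) := by
  classical
  obtain ⟨c, hca, hcb, hc⟩ := trans_structure hab (hQ.1 t htQ) hnt
  obtain ⟨d, hda, hdb, hd⟩ := trans_structure hab (hQ.1 t' ht'Q) hnt'
  have hcomm := hQ.2 t htQ t' ht'Q
  have huniq : ∀ (i : Fin (n + 1)), t i ≠ i → t' i ≠ i → False := by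
    intro i h1 h2
    exact htt' (unique_mover (hQ.1 t htQ) (hQ.1 t' ht'Q) hcomm h1 h2)
  have huniq2 : ∀ r ∈ Q, ∀ r' ∈ Q, ∀ i : Fin (n + 1), r i ≠ i → r' i ≠ i → r = r' := by
    intro r hr r' hr' i h1 h2
    by_cases he : r = r'
    · exact he
    · exact unique_mover (hQ.1 r hr) (hQ.1 r' hr') (hQ.2 r hr r' hr') h1 h2
  rcases hc with hc | hc <;> rcases hd with hd | hd
  · exfalso
    refine huniq a ?_ ?_
    · rw [hc, Equiv.swap_apply_left]; exact hca
    · rw [hd, Equiv.swap_apply_left]; exact hda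
  · -- t = swap a c, t' = swap b d
    have hcd : c ≠ d := by
      intro h
      refine huniq c ?_ ?_
      · rw [hc, Equiv.swap_apply_right]; exact Ne.symm hca
      · rw [h, hd, Equiv.swap_apply_right]; exact Ne.symm hdb
    have hother : ∀ r ∈ Q, r ≠ t → r ≠ t' → Equiv.swap a b * r = r * Equiv.swap a b := by
      intro r hr h1 h2
      by_contra hnc'
      obtain ⟨e, hea, heb, he⟩ := trans_structure hab (hQ.1 r hr) hnc'
      rcases he with he | he
      · refine h1 (huniq2 r hr t htQ a ?_ ?_)
        · rw [he, Equiv.swap_apply_left]; exact hea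
        · rw [hc, Equiv.swap_apply_left]; exact hca
      · refine h2 (huniq2 r hr t' ht'Q b ?_ ?_)
        · rw [he, Equiv.swap_apply_left]; exact heb
        · rw [hd, Equiv.swap_apply_left]; exact hdb
    exact rule3_main hQ hab hca hcb hda hdb hcd htQ ht'Q htt' hc hd hother
  · -- t = swap b c, t' = swap a d
    have hcd : c ≠ d := by
      intro h
      refine huniq c ?_ ?_
      · rw [hc, Equiv.swap_apply_right]; exact Ne.symm hcb
      · rw [h, hd, Equiv.swap_apply_right]; exact Ne.symm hda
    have hother : ∀ r ∈ Q, r ≠ t → r ≠ t' → Equiv.swap a b * r = r * Equiv.swap a b := by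
      intro r hr h1 h2
      by_contra hnc'
      obtain ⟨e, hea, heb, he⟩ := trans_structure hab (hQ.1 r hr) hnc'
      rcases he with he | he
      · refine h2 (huniq2 r hr t' ht'Q a ?_ ?_)
        · rw [he, Equiv.swap_apply_left]; exact hea
        · rw [hd, Equiv.swap_apply_left]; exact hda
      · refine h1 (huniq2 r hr t htQ b ?_ ?_)
        · rw [he, Equiv.swap_apply_left]; exact heb
        · rw [hc, Equiv.swap_apply_left]; exact hcb
    have hswap : Equiv.swap a b = Equiv.swap b a := Equiv.swap_comm a b
    rw [hswap] at hother ⊢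
    exact rule3_main hQ (Ne.symm hab) hcb hca hdb hda hcd htQ ht'Q htt' hc hd hother
  · exfalso
    refine huniq b ?_ ?_
    · rw [hc, Equiv.swap_apply_left]; exact hcb
    · rw [hd, Equiv.swap_apply_left]; exact hdb

end Aux

/-- Let `Q` be a set of pairwise commuting transpositions, `s` a
transposition, and `W := ⋂_{t∈Q} V_t`.  Then `W ≠ {0}` and
`V_s ∩ (W ∪ s(W)) = ⋂_{t∈Q'} V_t`, where `Q'` is obtained by the three rules below
(these cases are exhaustive: `s` fails to commute with at most two elements of `Q`);
moreover `Q'` is again a set of pairwise commuting transpositions, and in particular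
`V_s ∩ (W ∪ s(W)) ≠ {0}`. -/
theorem dotAct_of_inter_Vt (hn : 1 ≤ n)
    (Q : Set (Equiv.Perm (Fin (n + 1)))) (hQ : CommTranspositions n Q)
    (s : Equiv.Perm (Fin (n + 1))) (hs : IsTransposition s) :
    (⋂ t ∈ Q, Vt k n t) ≠ {0} ∧
    -- rule 1: `s` commutes with every element of `Q`
    ((∀ t ∈ Q, s * t = t * s) →
      Vt k n s ∩ ((⋂ t ∈ Q, Vt k n t) ∪ permSet k n s (⋂ t ∈ Q, Vt k n t)) =
        ⋂ t ∈ (Q ∪ {s}), Vt k n t ∧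
      CommTranspositions n (Q ∪ {s})) ∧
    -- rule 2: there is exactly one `t ∈ Q` not commuting with `s`
    (∀ t ∈ Q, s * t ≠ t * s → (∀ t' ∈ Q, t' ≠ t → s * t' = t' * s) →
      Vt k n s ∩ ((⋂ r ∈ Q, Vt k n r) ∪ permSet k n s (⋂ r ∈ Q, Vt k n r)) =
        ⋂ r ∈ ((Q \ {t}) ∪ {s}), Vt k n r ∧
      CommTranspositions n ((Q \ {t}) ∪ {s})) ∧
    -- rule 3: there are exactly two distinct `t, t' ∈ Q` not commuting with `s`
    (∀ t ∈ Q, ∀ t' ∈ Q, t ≠ t' → s * t ≠ t * s → s * t' ≠ t' * s →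
      Vt k n s ∩ ((⋂ r ∈ Q, Vt k n r) ∪ permSet k n s (⋂ r ∈ Q, Vt k n r)) =
        ⋂ r ∈ ((Q \ {t, t'}) ∪ {s, t * t' * s * t' * t}), Vt k n r ∧
      CommTranspositions n ((Q \ {t, t'}) ∪ {s, t * t' * s * t' * t})) ∧
    -- the three cases are exhaustive: at most two elements of `Q` fail to commute with `s`
    (∃ t t' : Equiv.Perm (Fin (n + 1)), ∀ r ∈ Q, s * r ≠ r * s → r = t ∨ r = t') ∧
    -- in particular `s · W ≠ {0}`
    Vt k n s ∩ ((⋂ t ∈ Q, Vt k n t) ∪ permSet k n s (⋂ t ∈ Q, Vt k n t)) ≠ {0} := by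
  classical
  obtain ⟨a, b, hab, rfl⟩ := hs
  have hWne := inter_ne_zero (k := k) hn hQ
  have hrule1 := fun hall => rule1_main (k := k) hQ hab hall
  have hrule2 : ∀ t ∈ Q, Equiv.swap a b * t ≠ t * Equiv.swap a b →
      (∀ t' ∈ Q, t' ≠ t → Equiv.swap a b * t' = t' * Equiv.swap a b) →
      (Vt k n (Equiv.swap a b) ∩
        ((⋂ r ∈ Q, Vt k n r) ∪ permSet k n (Equiv.swap a b) (⋂ r ∈ Q, Vt k n r)) =
        ⋂ r ∈ ((Q \ {t}) ∪ {Equiv.swap a b}), Vt k n r) ∧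
      CommTranspositions n ((Q \ {t}) ∪ {Equiv.swap a b}) :=
    fun t ht hnc hother => rule2_main (k := k) hQ hab ht hnc hother
  have hrule3 : ∀ t ∈ Q, ∀ t' ∈ Q, t ≠ t' →
      Equiv.swap a b * t ≠ t * Equiv.swap a b →
      Equiv.swap a b * t' ≠ t' * Equiv.swap a b →
      (Vt k n (Equiv.swap a b) ∩
        ((⋂ r ∈ Q, Vt k n r) ∪ permSet k n (Equiv.swap a b) (⋂ r ∈ Q, Vt k n r)) =
        ⋂ r ∈ ((Q \ {t, t'}) ∪ {Equiv.swap a b, t * t' * Equiv.swap a b * t' * t}), Vt k n r) ∧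
      CommTranspositions n
        ((Q \ {t, t'}) ∪ {Equiv.swap a b, t * t' * Equiv.swap a b * t' * t}) :=
    fun t ht t' ht' htt' hnt hnt' => rule3_full (k := k) hQ hab ht ht' htt' hnt hnt'
  refine ⟨hWne, hrule1, hrule2, hrule3, ?_, ?_⟩
  · -- exhaustiveness
    have key : ∀ r ∈ Q, Equiv.swap a b * r ≠ r * Equiv.swap a b → r a ≠ a ∨ r b ≠ b := by
      intro r hr hnc'
      obtain ⟨e, hea, heb, he⟩ := trans_structure hab (hQ.1 r hr) hnc'
      rcases he with he | he
      · exact Or.inl (by rw [he, Equiv.swap_apply_left]; exact hea)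
      · exact Or.inr (by rw [he, Equiv.swap_apply_left]; exact heb)
    have uniq : ∀ r ∈ Q, ∀ r' ∈ Q, ∀ i : Fin (n + 1), r i ≠ i → r' i ≠ i → r = r' := by
      intro r hr r' hr' i h1 h2
      by_cases he : r = r'
      · exact he
      · exact unique_mover (hQ.1 r hr) (hQ.1 r' hr') (hQ.2 r hr r' hr') h1 h2
    by_cases hA : ∃ r, r ∈ Q ∧ Equiv.swap a b * r ≠ r * Equiv.swap a b ∧ r a ≠ a
    · obtain ⟨tA, hAQ, -, hAa⟩ := hA
      by_cases hB : ∃ r, r ∈ Q ∧ Equiv.swap a b * r ≠ r * Equiv.swap a b ∧ r b ≠ b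
      · obtain ⟨tB, hBQ, -, hBb⟩ := hB
        refine ⟨tA, tB, fun r hr hnc' => ?_⟩
        rcases key r hr hnc' with h | h
        · exact Or.inl (uniq r hr tA hAQ a h hAa)
        · exact Or.inr (uniq r hr tB hBQ b h hBb)
      · push_neg at hB
        refine ⟨tA, tA, fun r hr hnc' => ?_⟩
        rcases key r hr hnc' with h | h
        · exact Or.inl (uniq r hr tA hAQ a h hAa)
        · exact (h (hB r hr hnc')).elim
    · push_neg at hA
      by_cases hB : ∃ r, r ∈ Q ∧ Equiv.swap a b * r ≠ r * Equiv.swap a b ∧ r b ≠ b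
      · obtain ⟨tB, hBQ, -, hBb⟩ := hB
        refine ⟨tB, tB, fun r hr hnc' => ?_⟩
        rcases key r hr hnc' with h | h
        · exact (h (hA r hr hnc')).elim
        · exact Or.inl (uniq r hr tB hBQ b h hBb)
      · push_neg at hB
        refine ⟨1, 1, fun r hr hnc' => ?_⟩
        rcases key r hr hnc' with h | h
        · exact (h (hA r hr hnc')).elim
        · exact (h (hB r hr hnc')).elim
  · -- nonzero
    by_cases hall : ∀ t ∈ Q, Equiv.swap a b * t = t * Equiv.swap a b
    · obtain ⟨heq, hCT⟩ := hrule1 hall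
      rw [heq]
      exact inter_ne_zero hn hCT
    · push_neg at hall
      obtain ⟨t₀, ht₀, hnc⟩ := hall
      by_cases h2 : ∃ t₁ ∈ Q, t₁ ≠ t₀ ∧ Equiv.swap a b * t₁ ≠ t₁ * Equiv.swap a b
      · obtain ⟨t₁, ht₁, hne, hnc1⟩ := h2
        obtain ⟨heq, hCT⟩ := hrule3 t₀ ht₀ t₁ ht₁ (fun h => hne h.symm) hnc hnc1
        rw [heq]
        exact inter_ne_zero hn hCT
      · push_neg at h2
        obtain ⟨heq, hCT⟩ := hrule2 t₀ ht₀ hnc (fun t' ht' hne => h2 t' ht' hne)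
        rw [heq]
        exact inter_ne_zero hn hCT

end TLpaper
end
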